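/- If w is a nonzero word in the free algebra ℚ⟨e_0,e_1,e_z⟩ containing at least one letter e_z, then the iterated integral L(w)(z) = ∫_{0<t_1<⋯<t_m<1} ∏_i dt_i/(t_i−a_i) tends to 0 as |z| → ∞ (z ∈ ℂ \ [0,1]), provided w is admissible (i.e., w ∈ 𝒜^1). -/

import Mathlib

open scoped BigOperators
open MeasureTheory Filter

noncomputable section

/-- Iterated integral over the open simplex `0 < t₁ < ⋯ < t_m < 1` of `∏ᵢ 1/(tᵢ - aᵢ)`. -/
def itInt (a : List ℂ) : ℂ :=
  ∫ t in {t : Fin a.length → ℝ | StrictMono t ∧ ∀ i, t i ∈ Set.Ioo (0:ℝ) 1},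
    ∏ i : Fin a.length, ((t i : ℂ) - a.get i)⁻¹

/-- Multiple zeta value attached to a list of exponents. -/
def mzv (k : List ℕ) : ℝ :=
  ∑' f : {f : Fin k.length → ℕ+ // StrictMono f},
    ∏ i : Fin k.length, (((f.1 i : ℕ) : ℝ) ^ (k.get i))⁻¹

/-- Letters: `0 ↦ e₀`, `1 ↦ e₁`, `2 ↦ e_z`. -/
abbrev Ltr := Fin 3

/-- The free noncommutative algebra `ℚ⟨e₀,e₁,e_z⟩` realized as a monoid algebra. -/
abbrev Alg := MonoidAlgebra ℚ (FreeMonoid Ltr)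

/-- The word (monomial) corresponding to a list of letters. -/
def wd (l : List Ltr) : Alg := MonoidAlgebra.of ℚ (FreeMonoid Ltr) (FreeMonoid.ofList l)

/-- Padded letter sequence: `a₀ = 0`, `a_{n+1} = 1`. -/
def pad (l : List Ltr) : ℕ → Ltr := fun i => (((0:Ltr) :: (l ++ [1])).getD i 0)

/-- Unordered-pair Kronecker delta. -/
def dl (a b c d : Ltr) : ℚ := if (a = c ∧ b = d) ∨ (a = d ∧ b = c) then 1 else 0

/-- `∂_{z,b}` on a single word. -/
def delWord (b : Ltr) (l : List Ltr) : Alg :=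
  ∑ i ∈ Finset.range l.length,
    (dl (pad l (i+1)) (pad l (i+2)) 2 b - dl (pad l i) (pad l (i+1)) 2 b) •
      wd (l.eraseIdx i)

/-- The linear operator `∂_{z,b}` on `ℚ⟨e₀,e₁,e_z⟩`. -/
def del (b : Ltr) : Alg →ₗ[ℚ] Alg :=
  (Finsupp.lift Alg ℚ (FreeMonoid Ltr) (fun l => delWord b (FreeMonoid.toList l))).comp
    (MonoidAlgebra.coeffLinearEquiv ℚ).toLinearMap

/-- Evaluation of letters at a point `z`. -/
def ev (z : ℂ) : Ltr → ℂ := fun i => if i = 0 then 0 else if i = 1 then 1 else z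

/-- The linear map `L` (depending on `z`) given by iterated integrals. -/
def LL (z : ℂ) : Alg →ₗ[ℚ] ℂ :=
  (Finsupp.lift ℂ ℚ (FreeMonoid Ltr) (fun l => itInt ((FreeMonoid.toList l).map (ev z)))).comp
    (MonoidAlgebra.coeffLinearEquiv ℚ).toLinearMap

/-- `A_n = (e₁e₀)^n`. -/
def Aw : ℕ → List Ltr
  | 0 => []
  | n+1 => 1 :: 0 :: Aw n

/-- `B_n = (e₁e₀)^n e₁`. -/
def Bw (n : ℕ) : List Ltr := Aw n ++ [1]

/-- `Ā_n = (e₀e₁)^n`. -/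
def Abar : ℕ → List Ltr
  | 0 => []
  | n+1 => 0 :: 1 :: Abar n

/-- `B̄_n = (e₀e₁)^n e₀`. -/
def Bbar (n : ℕ) : List Ltr := Abar n ++ [0]

/-- The single letter `e_z`. -/
def ezw : List Ltr := [2]

/-- Flip `e₀ ↔ e₁` (fixing `e_z`, which never occurs in duality words). -/
def flipL : Ltr → Ltr := fun i => if i = 0 then 1 else if i = 1 then 0 else 2

/-- The duality anti-automorphism `τ` as a linear map. -/
def tau : Alg →ₗ[ℚ] Alg :=
  (Finsupp.lift Alg ℚ (FreeMonoid Ltr)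
    (fun l => ((-1 : ℚ) ^ (FreeMonoid.toList l).length) •
      wd (((FreeMonoid.toList l).reverse).map flipL))).comp
    (MonoidAlgebra.coeffLinearEquiv ℚ).toLinearMap

/-- `Δ(w) = w - τ(w)`. -/
def Del (x : Alg) : Alg := x - tau x

/-- The segment `[0,1] ⊂ ℂ`. -/
def seg : Set ℂ := (fun t : ℝ => (t : ℂ)) '' Set.Icc 0 1

/-- Admissibility of a word: it is empty, or starts with `e₁` or `e_z`
and ends with `e₀` or `e_z`. -/
def adm (l : List Ltr) : Prop :=
  ∀ h : l ≠ [], (l.head h = 1 ∨ l.head h = 2) ∧ (l.getLast h = 0 ∨ l.getLast h = 2)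

/-- The subspace `𝒜¹` spanned by admissible words. -/
def A1 : Submodule ℚ Alg := Submodule.span ℚ {x | ∃ l, adm l ∧ x = wd l}

/-- The span of words containing the letter `e_z` (the ideal `ℐ = 𝒜e_z𝒜`). -/
def Iz : Submodule ℚ Alg := Submodule.span ℚ {x | ∃ l : List Ltr, (2:Ltr) ∈ l ∧ x = wd l}

/-- `F_{ee}(m,n)`. -/
def Fee (s : ℕ) (m n : ℤ) : Alg :=
  if m < 0 ∨ n < 0 then 0 else
  wd (Aw s ++ Bbar m.toNat ++ ezw ++ Aw n.toNat)
    + wd (Aw m.toNat ++ ezw ++ Aw s ++ ezw ++ Aw n.toNat)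
    + wd (Aw m.toNat ++ ezw ++ Abar s ++ ezw ++ Aw n.toNat)
    + wd (Aw m.toNat ++ ezw ++ Bw n.toNat ++ Aw s)
    - wd (Bw (s + m.toNat) ++ ezw ++ Aw n.toNat)
    - wd (Aw m.toNat ++ ezw ++ Bbar (s + n.toNat))

/-- `F_{oe}(m,n)`. -/
def Foe (s : ℕ) (m n : ℤ) : Alg :=
  if m < 0 ∨ n < 0 then 0 else
  wd (Aw s ++ Abar (m.toNat + 1) ++ ezw ++ Aw n.toNat)
    + wd (Bw m.toNat ++ ezw ++ Aw s ++ ezw ++ Aw n.toNat)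
    + wd (Bw m.toNat ++ ezw ++ Abar s ++ ezw ++ Aw n.toNat)
    + wd (Bw m.toNat ++ ezw ++ Bw n.toNat ++ Aw s)
    - wd (Aw (s + m.toNat + 1) ++ ezw ++ Aw n.toNat)
    - wd (Bw m.toNat ++ ezw ++ Bbar (s + n.toNat))

/-- `F_{eo}(m,n)`. -/
def Feo (s : ℕ) (m n : ℤ) : Alg :=
  if m < 0 ∨ n < 0 then 0 else
  wd (Aw s ++ Bbar m.toNat ++ ezw ++ Bbar n.toNat)
    + wd (Aw m.toNat ++ ezw ++ Aw s ++ ezw ++ Bbar n.toNat)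
    + wd (Aw m.toNat ++ ezw ++ Abar s ++ ezw ++ Bbar n.toNat)
    + wd (Aw m.toNat ++ ezw ++ Abar (n.toNat + 1) ++ Aw s)
    - wd (Bw (s + m.toNat) ++ ezw ++ Bbar n.toNat)
    - wd (Aw m.toNat ++ ezw ++ Aw (s + n.toNat + 1))

/-- `F_{oo}(m,n)`. -/
def Foo (s : ℕ) (m n : ℤ) : Alg :=
  if m < 0 ∨ n < 0 then 0 else
  wd (Aw s ++ Abar (m.toNat + 1) ++ ezw ++ Bbar n.toNat)
    + wd (Bw m.toNat ++ ezw ++ Aw s ++ ezw ++ Bbar n.toNat)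
    + wd (Bw m.toNat ++ ezw ++ Abar s ++ ezw ++ Bbar n.toNat)
    + wd (Bw m.toNat ++ ezw ++ Abar (n.toNat + 1) ++ Aw s)
    - wd (Aw (s + m.toNat + 1) ++ ezw ++ Bbar n.toNat)
    - wd (Bw m.toNat ++ ezw ++ Aw (s + n.toNat + 1))

def psi (a : Ltr) (t : ℝ) : ENNReal :=
  if a = 0 then ENNReal.ofReal t⁻¹ else if a = 1 then ENNReal.ofReal (1-t)⁻¹ else 1

def simS (n : ℕ) (x : ℝ) : Set (Fin n → ℝ) := {t | StrictMono t ∧ ∀ i, t i ∈ Set.Ioo x 1}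

def Jf (r : List Ltr) (x : ℝ) : ENNReal :=
  ∫⁻ t in simS r.length x, ∏ i, psi (r.get i) (t i)

lemma psi_ne_top (a : Ltr) (t : ℝ) : psi a t ≠ ⊤ := by
  unfold psi; split_ifs <;> simp

lemma psi_zero : psi 0 = fun t : ℝ => ENNReal.ofReal t⁻¹ := by funext t; simp [psi]
lemma psi_one : psi 1 = fun t : ℝ => ENNReal.ofReal (1-t)⁻¹ := by funext t; simp [psi]
lemma psi_two : psi 2 = fun _ : ℝ => (1 : ENNReal) := by funext t; simp [psi]

lemma measurable_psi (a : Ltr) : Measurable (psi a) := by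
  by_cases h0 : a = 0
  · subst h0; rw [psi_zero]; exact ENNReal.measurable_ofReal.comp measurable_inv
  by_cases h1 : a = 1
  · subst h1; rw [psi_one]
    exact ENNReal.measurable_ofReal.comp ((measurable_const.sub measurable_id).inv)
  · have h : psi a = fun _ : ℝ => (1 : ENNReal) := by funext t; simp [psi, h0, h1]
    rw [h]; exact measurable_const

lemma measurableSet_simS (n : ℕ) (x : ℝ) : MeasurableSet (simS n x) := by
  have h1 : MeasurableSet {t : Fin n → ℝ | StrictMono t} := by
    have : {t : Fin n → ℝ | StrictMono t} = ⋂ i, ⋂ j, {t | i < j → t i < t j} := by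
      ext t; simp [StrictMono]
    rw [this]
    refine MeasurableSet.iInter fun i => MeasurableSet.iInter fun j => ?_
    by_cases h : i < j
    · simp only [h, true_implies]
      exact measurableSet_lt (measurable_pi_apply i) (measurable_pi_apply j)
    · simp [h]
  have h2 : MeasurableSet {t : Fin n → ℝ | ∀ i, t i ∈ Set.Ioo x 1} := by
    have : {t : Fin n → ℝ | ∀ i, t i ∈ Set.Ioo x 1} = ⋂ i, (fun t : Fin n → ℝ => t i) ⁻¹' Set.Ioo x 1 := by
      ext t; simp
    rw [this]
    exact MeasurableSet.iInter fun i => (measurable_pi_apply i) measurableSet_Ioo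
  exact (Set.setOf_and ▸ (h1.inter h2) : _)

lemma J_nil (x : ℝ) : Jf [] x = 1 := by
  have hS : simS ([] : List Ltr).length x = Set.univ := by
    ext t
    simp only [simS, Set.mem_setOf_eq, Set.mem_univ, iff_true]
    exact ⟨fun i => i.elim0, fun i => i.elim0⟩
  rw [Jf, hS]
  simp [Measure.restrict_univ]
  rw [MeasureTheory.volume_pi, Measure.pi_univ]
  simp

lemma cons_mem_simS {n : ℕ} {x t0 : ℝ} {u : Fin n → ℝ} :
    Fin.cons t0 u ∈ simS (n+1) x ↔ t0 ∈ Set.Ioo x 1 ∧ u ∈ simS n t0 := by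
  constructor
  · rintro ⟨hm, hio⟩
    refine ⟨hio 0, fun i j hij => ?_, fun i => ⟨?_, (hio i.succ).2⟩⟩
    · have := hm (show (i.succ : Fin (n+1)) < j.succ from Fin.succ_lt_succ_iff.mpr hij)
      simpa using this
    · have := hm (Fin.succ_pos i)
      simpa using this
  · rintro ⟨⟨hx, h1⟩, hu, hio⟩
    constructor
    · intro i j hij
      rcases Fin.eq_zero_or_eq_succ i with rfl | ⟨i', rfl⟩
      · rcases Fin.eq_zero_or_eq_succ j with rfl | ⟨j', rfl⟩
        · exact absurd hij (lt_irrefl _)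
        · simpa using (hio j').1
      · rcases Fin.eq_zero_or_eq_succ j with rfl | ⟨j', rfl⟩
        · exact absurd hij (Fin.not_lt_zero _)
        · simpa using hu (Fin.succ_lt_succ_iff.mp hij)
    · intro i
      rcases Fin.eq_zero_or_eq_succ i with rfl | ⟨i', rfl⟩
      · exact ⟨hx, h1⟩
      · simpa using ⟨hx.trans (hio i').1, (hio i').2⟩

lemma J_cons (a : Ltr) (r : List Ltr) (x : ℝ) :
    Jf (a :: r) x = ∫⁻ t in Set.Ioo x 1, psi a t * Jf r t := by
  set n := r.length with hn
  have hprod_meas : Measurable fun t : Fin (n+1) → ℝ => ∏ i, psi ((a::r).get i) (t i) :=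
    Finset.measurable_prod _ fun i _ => (measurable_psi _).comp (measurable_pi_apply i)
  set F : (Fin (n+1) → ℝ) → ENNReal :=
    (simS (n+1) x).indicator (fun t => ∏ i, psi ((a::r).get i) (t i)) with hF
  have hFmeas : Measurable F := hprod_meas.indicator (measurableSet_simS _ _)
  set e := MeasurableEquiv.piFinSuccAbove (fun _ : Fin (n+1) => ℝ) 0 with he
  have h1 : Jf (a :: r) x = ∫⁻ t, F t := by
    rw [Jf, hF, lintegral_indicator (measurableSet_simS (n+1) x) _]
    rfl
  have h2 : ∫⁻ t, F t = ∫⁻ p : ℝ × (Fin n → ℝ), F (e.symm p) :=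
    (((volume_preserving_piFinSuccAbove (fun _ : Fin (n+1) => ℝ) 0).symm e).lintegral_comp
      hFmeas).symm
  have h3 : ∀ p : ℝ × (Fin n → ℝ), e.symm p = Fin.cons p.1 p.2 := by
    intro p; simp [he, MeasurableEquiv.piFinSuccAbove, Fin.consEquiv]
  have hprod : ∀ (t0 : ℝ) (u : Fin n → ℝ),
      (∏ i : Fin (n+1), psi ((a::r).get i) (Fin.cons (α := fun _ => ℝ) t0 u i))
        = psi a t0 * ∏ i : Fin n, psi (r.get i) (u i) := by
    intro t0 u
    rw [Fin.prod_univ_succ]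
    simp
  have h4 : ∀ (t0 : ℝ) (u : Fin n → ℝ),
      F (Fin.cons t0 u) = (Set.Ioo x 1).indicator
        (fun s => psi a s * ((simS n s).indicator (fun v => ∏ i : Fin n, psi (r.get i) (v i)) u)) t0 := by
    intro t0 u
    rw [hF]
    by_cases hm1 : t0 ∈ Set.Ioo x 1 <;> by_cases hm2 : u ∈ simS n t0
    · rw [Set.indicator_of_mem (cons_mem_simS.mpr ⟨hm1, hm2⟩), Set.indicator_of_mem hm1,
        Set.indicator_of_mem hm2]
      exact hprod t0 u
    · rw [Set.indicator_of_notMem (fun h => hm2 (cons_mem_simS.mp h).2),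
        Set.indicator_of_mem hm1, Set.indicator_of_notMem hm2, mul_zero]
    · rw [Set.indicator_of_notMem (fun h => hm1 (cons_mem_simS.mp h).1),
        Set.indicator_of_notMem hm1]
    · rw [Set.indicator_of_notMem (fun h => hm1 (cons_mem_simS.mp h).1),
        Set.indicator_of_notMem hm1]
  have h5 : ∀ t0 : ℝ, (∫⁻ u, (simS n t0).indicator (fun v => ∏ i : Fin n, psi (r.get i) (v i)) u)
      = Jf r t0 := by
    intro t0
    rw [lintegral_indicator (measurableSet_simS _ _) _]
    rfl
  rw [h1, h2]
  rw [show (volume : Measure (ℝ × (Fin n → ℝ))) = (volume : Measure ℝ).prod volume from rfl]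
  have hmeas2 : Measurable fun p : ℝ × (Fin n → ℝ) => F (e.symm p) := hFmeas.comp e.symm.measurable
  rw [lintegral_prod _ hmeas2.aemeasurable]
  have : ∀ t0 : ℝ, (∫⁻ u : Fin n → ℝ, F (e.symm (t0, u)))
      = (Set.Ioo x 1).indicator (fun s => psi a s * Jf r s) t0 := by
    intro t0
    calc ∫⁻ u : Fin n → ℝ, F (e.symm (t0, u)) = ∫⁻ u : Fin n → ℝ, F (Fin.cons t0 u) := by
          simp only [h3]
      _ = (Set.Ioo x 1).indicator (fun s => psi a s * Jf r s) t0 := by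
          by_cases hm1 : t0 ∈ Set.Ioo x 1
          · simp only [h4, Set.indicator_of_mem hm1]
            rw [lintegral_const_mul' _ _ (psi_ne_top a t0), h5]
          · simp only [h4, Set.indicator_of_notMem hm1, lintegral_zero]
  simp only [this]
  rw [lintegral_indicator measurableSet_Ioo _]


section
noncomputable def Lg (x : ℝ) : ℝ := Real.log x⁻¹

lemma Lg_nonneg {x : ℝ} (hx0 : 0 < x) (hx1 : x ≤ 1) : 0 ≤ Lg x :=
  Real.log_nonneg ((one_le_inv₀ hx0).mpr hx1)

lemma Lg_mono {x t : ℝ} (hx0 : 0 < x) (hxt : x ≤ t) : Lg t ≤ Lg x :=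
  Real.log_le_log (inv_pos.mpr (hx0.trans_le hxt)) (inv_anti₀ hx0 hxt)

lemma Lg_le_frac {x : ℝ} (hx0 : 0 < x) : Lg x ≤ (1-x)/x := by
  have h := Real.log_le_sub_one_of_pos (inv_pos.mpr hx0)
  have e : x⁻¹ - 1 = (1-x)/x := by field_simp
  show Real.log x⁻¹ ≤ _
  linarith

lemma lint_inv {x : ℝ} (hx0 : 0 < x) (hx1 : x < 1) :
    ∫⁻ t in Set.Ioo x 1, ENNReal.ofReal t⁻¹ = ENNReal.ofReal (Lg x) := by
  have hint : IntegrableOn (fun t : ℝ => t⁻¹) (Set.Ioo x 1) := by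
    apply (ContinuousOn.integrableOn_Icc ?_).mono_set Set.Ioo_subset_Icc_self
    exact ContinuousOn.inv₀ continuousOn_id (fun t ht => ne_of_gt (lt_of_lt_of_le hx0 ht.1))
  have hnn : 0 ≤ᶠ[ae (volume.restrict (Set.Ioo x 1))] fun t : ℝ => t⁻¹ := by
    filter_upwards [ae_restrict_mem measurableSet_Ioo] with t ht
    exact inv_nonneg.mpr (le_of_lt (hx0.trans ht.1))
  rw [← ofReal_integral_eq_lintegral_ofReal hint hnn]
  congr 1
  rw [← MeasureTheory.integral_Ioc_eq_integral_Ioo, ← intervalIntegral.integral_of_le hx1.le]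
  rw [integral_inv (by
    intro h
    rcases Set.mem_uIcc.mp h with ⟨h1, _⟩ | ⟨_, h2⟩
    · exact absurd h1 (not_le.mpr hx0)
    · linarith)]
  rw [Lg, one_div]

lemma lint_inv_pow (j : ℕ) {x : ℝ} (hx0 : 0 < x) (hx1 : x < 1) (w : ℝ) (hw : 0 ≤ w) :
    ∫⁻ t in Set.Ioo x 1, ENNReal.ofReal t⁻¹ * ENNReal.ofReal (w * (1 + Lg t)^j)
      ≤ ENNReal.ofReal (w * (Lg x * (1 + Lg x)^j)) := by
  have h1 : ∀ t ∈ Set.Ioo x 1,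
      ENNReal.ofReal t⁻¹ * ENNReal.ofReal (w * (1 + Lg t)^j)
        ≤ ENNReal.ofReal t⁻¹ * ENNReal.ofReal (w * (1 + Lg x)^j) := by
    intro t ht
    have ht0 : 0 < t := hx0.trans ht.1
    have hle : Lg t ≤ Lg x := Lg_mono hx0 ht.1.le
    have h1t : 0 ≤ 1 + Lg t := by
      have := Lg_nonneg ht0 ht.2.le; linarith
    exact mul_le_mul_right (ENNReal.ofReal_le_ofReal
      (mul_le_mul_of_nonneg_left (pow_le_pow_left₀ h1t (by linarith) j) hw)) _
  calc ∫⁻ t in Set.Ioo x 1, ENNReal.ofReal t⁻¹ * ENNReal.ofReal (w * (1 + Lg t)^j)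
      ≤ ∫⁻ t in Set.Ioo x 1, ENNReal.ofReal t⁻¹ * ENNReal.ofReal (w * (1 + Lg x)^j) :=
        setLIntegral_mono' measurableSet_Ioo h1
    _ = (∫⁻ t in Set.Ioo x 1, ENNReal.ofReal t⁻¹) * ENNReal.ofReal (w * (1 + Lg x)^j) :=
        lintegral_mul_const' _ _ ENNReal.ofReal_ne_top
    _ = ENNReal.ofReal (Lg x) * ENNReal.ofReal (w * (1 + Lg x)^j) := by rw [lint_inv hx0 hx1]
    _ ≤ ENNReal.ofReal (w * (Lg x * (1 + Lg x)^j)) := by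
        rw [← ENNReal.ofReal_mul (Lg_nonneg hx0 hx1.le)]
        exact ENNReal.ofReal_le_ofReal (le_of_eq (by ring))
end

lemma keyInt (k : ℕ) :
    ∫⁻ t in Set.Ioo (0:ℝ) 1, ENNReal.ofReal ((1 + Lg t)^k) < ⊤ := by
  set c : ℝ := 2*k+2 with hc
  have hc0 : (0:ℝ) < c := by positivity
  have hexp : (-1 : ℝ) < -((k:ℝ)/c) := by
    have : (k:ℝ)/c < 1 := by
      rw [div_lt_one hc0]
      push_cast; linarith
    linarith
  have hint0 : IntegrableOn (fun t : ℝ => t ^ (-((k:ℝ)/c))) (Set.Ioo 0 1) :=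
    (intervalIntegrable_iff_integrableOn_Ioo_of_le zero_le_one).mp (intervalIntegral.intervalIntegrable_rpow' hexp)
  have hint : IntegrableOn (fun t : ℝ => (1+c)^k * t ^ (-((k:ℝ)/c))) (Set.Ioo 0 1) :=
    hint0.const_mul _
  have hb : ∀ t ∈ Set.Ioo (0:ℝ) 1,
      ENNReal.ofReal ((1 + Lg t)^k) ≤ ENNReal.ofReal ((1+c)^k * t ^ (-((k:ℝ)/c))) := by
    intro t ht
    apply ENNReal.ofReal_le_ofReal
    have ht0 : 0 < t := ht.1
    have hti : 1 ≤ t⁻¹ := one_le_inv₀ ht0 |>.mpr ht.2.le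
    have hrpow1 : (1:ℝ) ≤ t⁻¹ ^ (c⁻¹) := Real.one_le_rpow hti (by positivity)
    have hlog : Lg t ≤ c * t⁻¹ ^ (c⁻¹) := by
      have h1 : Real.log (t⁻¹ ^ (c⁻¹)) = c⁻¹ * Real.log t⁻¹ := Real.log_rpow (by positivity) _
      have h2 : Real.log (t⁻¹ ^ (c⁻¹)) ≤ t⁻¹ ^ (c⁻¹) - 1 :=
        Real.log_le_sub_one_of_pos (by positivity)
      have h3 : Real.log t⁻¹ = c * Real.log (t⁻¹ ^ (c⁻¹)) := by
        rw [h1]; field_simp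
      rw [Lg, h3]
      nlinarith [hrpow1]
    have hstep : 1 + Lg t ≤ (1+c) * t⁻¹ ^ (c⁻¹) := by
      nlinarith [hrpow1]
    have h1t : 0 ≤ 1 + Lg t := by
      have := Lg_nonneg ht0 ht.2.le; linarith
    have := pow_le_pow_left₀ h1t hstep k
    calc (1 + Lg t)^k ≤ ((1+c) * t⁻¹ ^ (c⁻¹))^k := this
      _ = (1+c)^k * (t⁻¹ ^ (c⁻¹))^k := mul_pow _ _ _
      _ = (1+c)^k * t ^ (-((k:ℝ)/c)) := by
          congr 1
          rw [← Real.rpow_natCast (t⁻¹ ^ (c⁻¹)) k, ← Real.rpow_mul (by positivity),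
            Real.inv_rpow ht0.le, ← Real.rpow_neg ht0.le]
          congr 1
          ring
  calc ∫⁻ t in Set.Ioo (0:ℝ) 1, ENNReal.ofReal ((1 + Lg t)^k)
      ≤ ∫⁻ t in Set.Ioo (0:ℝ) 1, ENNReal.ofReal ((1+c)^k * t ^ (-((k:ℝ)/c))) :=
        setLIntegral_mono' measurableSet_Ioo hb
    _ < ⊤ := hint.lintegral_lt_top

lemma ltr_cases (a : Ltr) : a = 0 ∨ a = 1 ∨ a = 2 := by revert a; decide

lemma frac_mono {x t : ℝ} (hx0 : 0 < x) (hxt : x ≤ t) : (1-t)/t ≤ (1-x)/x := by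
  have ht0 : 0 < t := hx0.trans_le hxt
  rw [div_le_div_iff₀ ht0 hx0]
  nlinarith

lemma J_bound (r : List Ltr) : ∀ (hr : r ≠ []), r.getLast hr ≠ 1 → ∀ {x : ℝ}, 0 < x → x < 1 →
    Jf r x ≤ ENNReal.ofReal ((1-x)/x * (1 + Lg x)^(r.length - 1)) ∧
    Jf r x ≤ ENNReal.ofReal ((1 + Lg x)^r.length) := by
  induction r with
  | nil => intro hr; exact absurd rfl hr
  | cons a r ih =>
    intro hr hl x hx0 hx1
    have hfrac : 0 ≤ (1-x)/x := div_nonneg (by linarith) hx0.le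
    have hLx := Lg_nonneg hx0 hx1.le
    have h1L : (1:ℝ) ≤ 1 + Lg x := by linarith
    have h0L : (0:ℝ) ≤ 1 + Lg x := by linarith
    have hfr2 : Lg x ≤ (1-x)/x := Lg_le_frac hx0
    by_cases hr' : r = []
    · subst hr'
      have ha : a ≠ 1 := by simpa using hl
      rw [J_cons]
      have hsimp : ∀ t : ℝ, psi a t * Jf [] t = psi a t := fun t => by rw [J_nil, mul_one]
      simp only [hsimp, List.length_cons, List.length_nil, Nat.add_sub_cancel]
      rcases ltr_cases a with rfl | rfl | rfl
      · simp only [psi_zero]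
        rw [lint_inv hx0 hx1]
        constructor
        · exact ENNReal.ofReal_le_ofReal (by simpa using hfr2)
        · exact ENNReal.ofReal_le_ofReal (by simpa using (by linarith : Lg x ≤ 1 + Lg x))
      · exact absurd rfl ha
      · simp only [psi_two]
        rw [setLIntegral_one, Real.volume_Ioo]
        constructor
        · apply ENNReal.ofReal_le_ofReal
          have : 1 - x ≤ (1-x)/x := by rw [le_div_iff₀ hx0]; nlinarith
          simpa using this
        · exact ENNReal.ofReal_le_ofReal (by simpa using (by linarith : 1 - x ≤ 1 + Lg x))
    · have hl' : r.getLast hr' ≠ 1 := by rwa [List.getLast_cons hr'] at hl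
      set k := r.length with hk
      have hk1 : 1 ≤ k := List.length_pos_iff.mpr hr'
      have hkk : k - 1 + 1 = k := Nat.succ_pred_eq_of_pos hk1
      have ihC : ∀ t ∈ Set.Ioo x 1, Jf r t ≤ ENNReal.ofReal ((1-t)/t * (1 + Lg t)^(k-1)) :=
        fun t ht => (ih hr' hl' (hx0.trans ht.1) ht.2).1
      have ihD : ∀ t ∈ Set.Ioo x 1, Jf r t ≤ ENNReal.ofReal ((1 + Lg t)^k) :=
        fun t ht => (ih hr' hl' (hx0.trans ht.1) ht.2).2
      have main : ∀ (j : ℕ) (w : ℝ), 0 ≤ w →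
          (∀ t ∈ Set.Ioo x 1, psi a t * Jf r t
            ≤ ENNReal.ofReal t⁻¹ * ENNReal.ofReal (w * (1 + Lg t)^j)) →
          Jf (a::r) x ≤ ENNReal.ofReal (w * (Lg x * (1 + Lg x)^j)) := by
        intro j w hw hpt
        rw [J_cons]
        calc ∫⁻ t in Set.Ioo x 1, psi a t * Jf r t
            ≤ ∫⁻ t in Set.Ioo x 1, ENNReal.ofReal t⁻¹ * ENNReal.ofReal (w * (1 + Lg t)^j) :=
              setLIntegral_mono' measurableSet_Ioo hpt
          _ ≤ ENNReal.ofReal (w * (Lg x * (1 + Lg x)^j)) := lint_inv_pow j hx0 hx1 w hw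
      have hlen : (a::r).length - 1 = k := by simp [hk]
      have hlen2 : (a::r).length = k + 1 := by simp [hk]
      rw [hlen, hlen2]
      have hone : ∀ t ∈ Set.Ioo x 1, (1:ENNReal) ≤ ENNReal.ofReal t⁻¹ := by
        intro t ht
        rw [ENNReal.one_le_ofReal]
        exact (one_le_inv₀ (hx0.trans ht.1)).mpr ht.2.le
      rcases ltr_cases a with rfl | rfl | rfl
      -- a = 0
      · constructor
        · refine le_trans (main (k-1) ((1-x)/x) hfrac ?_) (ENNReal.ofReal_le_ofReal ?_)
          · intro t ht
            simp only [psi_zero]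
            refine mul_le_mul_right (le_trans (ihC t ht) (ENNReal.ofReal_le_ofReal ?_)) _
            exact mul_le_mul_of_nonneg_right (frac_mono hx0 ht.1.le)
              (pow_nonneg (by have := Lg_nonneg (hx0.trans ht.1) ht.2.le; linarith) _)
          · rw [← hkk, pow_succ]
            apply mul_le_mul_of_nonneg_left _ hfrac
            rw [mul_comm (Lg x) _]
            exact mul_le_mul_of_nonneg_left (by linarith) (pow_nonneg h0L _)
        · refine le_trans (main k 1 zero_le_one ?_) (ENNReal.ofReal_le_ofReal ?_)
          · intro t ht
            simp only [psi_zero]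
            exact mul_le_mul_right (by simpa [one_mul] using ihD t ht) _
          · rw [one_mul, pow_succ, mul_comm (Lg x) _]
            exact mul_le_mul_of_nonneg_left (by linarith) (pow_nonneg h0L _)
      -- a = 1
      · have hpt1 : ∀ t ∈ Set.Ioo x 1, psi 1 t * Jf r t
            ≤ ENNReal.ofReal t⁻¹ * ENNReal.ofReal (1 * (1 + Lg t)^(k-1)) := by
          intro t ht
          have ht0 : 0 < t := hx0.trans ht.1
          have ht1 : t < 1 := ht.2
          have h1t : (0:ℝ) < 1 - t := by linarith
          have heq : ENNReal.ofReal (1-t)⁻¹ * ENNReal.ofReal ((1-t)/t * (1 + Lg t)^(k-1))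
              = ENNReal.ofReal t⁻¹ * ENNReal.ofReal (1 * (1 + Lg t)^(k-1)) := by
            rw [← ENNReal.ofReal_mul (by positivity), ← ENNReal.ofReal_mul (by positivity)]
            congr 1
            field_simp
          calc psi 1 t * Jf r t
              ≤ ENNReal.ofReal (1-t)⁻¹ * ENNReal.ofReal ((1-t)/t * (1 + Lg t)^(k-1)) := by
                rw [psi_one]; exact mul_le_mul_right (ihC t ht) _
            _ = _ := heq
        constructor
        · refine le_trans (main (k-1) 1 zero_le_one hpt1) (ENNReal.ofReal_le_ofReal ?_)
          rw [one_mul]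
          exact mul_le_mul hfr2 (pow_le_pow_right₀ h1L (Nat.sub_le k 1)) (pow_nonneg h0L _) hfrac
        · refine le_trans (main (k-1) 1 zero_le_one hpt1) (ENNReal.ofReal_le_ofReal ?_)
          rw [one_mul]
          calc Lg x * (1 + Lg x)^(k-1) ≤ (1 + Lg x) * (1 + Lg x)^(k-1) :=
                mul_le_mul_of_nonneg_right (by linarith) (pow_nonneg h0L _)
            _ = (1 + Lg x)^(k-1+1) := (pow_succ' _ _).symm
            _ ≤ (1 + Lg x)^(k+1) := pow_le_pow_right₀ h1L (by omega)
      -- a = 2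
      · constructor
        · refine le_trans (main (k-1) ((1-x)/x) hfrac ?_) (ENNReal.ofReal_le_ofReal ?_)
          · intro t ht
            rw [psi_two, one_mul]
            calc Jf r t ≤ ENNReal.ofReal ((1-x)/x * (1 + Lg t)^(k-1)) := by
                  refine le_trans (ihC t ht) (ENNReal.ofReal_le_ofReal ?_)
                  exact mul_le_mul_of_nonneg_right (frac_mono hx0 ht.1.le)
                    (pow_nonneg (by have := Lg_nonneg (hx0.trans ht.1) ht.2.le; linarith) _)
              _ ≤ ENNReal.ofReal t⁻¹ * ENNReal.ofReal ((1-x)/x * (1 + Lg t)^(k-1)) := by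
                  conv_lhs => rw [← one_mul (ENNReal.ofReal ((1-x)/x * (1 + Lg t)^(k-1)))]
                  exact mul_le_mul_left (hone t ht) _
          · rw [← hkk, pow_succ]
            apply mul_le_mul_of_nonneg_left _ hfrac
            rw [mul_comm (Lg x) _]
            exact mul_le_mul_of_nonneg_left (by linarith) (pow_nonneg h0L _)
        · refine le_trans (main k 1 zero_le_one ?_) (ENNReal.ofReal_le_ofReal ?_)
          · intro t ht
            rw [psi_two, one_mul]
            calc Jf r t ≤ ENNReal.ofReal (1 * (1 + Lg t)^k) := by
                  simpa [one_mul] using ihD t ht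
              _ ≤ ENNReal.ofReal t⁻¹ * ENNReal.ofReal (1 * (1 + Lg t)^k) := by
                  conv_lhs => rw [← one_mul (ENNReal.ofReal (1 * (1 + Lg t)^k))]
                  exact mul_le_mul_left (hone t ht) _
          · rw [one_mul, pow_succ, mul_comm (Lg x) _]
            exact mul_le_mul_of_nonneg_left (by linarith) (pow_nonneg h0L _)

lemma J_fin (l : List Ltr) (hne : l ≠ []) (hh : l.head hne ≠ 0) (hl : l.getLast hne ≠ 1) :
    Jf l 0 < ⊤ := by
  rcases l with _ | ⟨a, r⟩
  · exact absurd rfl hne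
  have hh' : a ≠ 0 := by simpa using hh
  rw [J_cons]
  by_cases hr' : r = []
  · subst hr'
    have ha : a ≠ 1 := by simpa using hl
    have ha2 : a = 2 := by rcases ltr_cases a with rfl | rfl | rfl <;> simp_all
    subst ha2
    have : ∀ t : ℝ, psi 2 t * Jf [] t = 1 := fun t => by rw [J_nil, psi_two, mul_one]
    simp only [this]
    rw [setLIntegral_one, Real.volume_Ioo]
    exact ENNReal.ofReal_lt_top
  · have hl' : r.getLast hr' ≠ 1 := by rwa [List.getLast_cons hr'] at hl
    set k := r.length with hk
    have hk1 : 1 ≤ k := List.length_pos_iff.mpr hr'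
    have ihC : ∀ t ∈ Set.Ioo (0:ℝ) 1, Jf r t ≤ ENNReal.ofReal ((1-t)/t * (1 + Lg t)^(k-1)) :=
      fun t ht => (J_bound r hr' hl' ht.1 ht.2).1
    have ihD : ∀ t ∈ Set.Ioo (0:ℝ) 1, Jf r t ≤ ENNReal.ofReal ((1 + Lg t)^k) :=
      fun t ht => (J_bound r hr' hl' ht.1 ht.2).2
    rcases ltr_cases a with rfl | rfl | rfl
    · exact absurd rfl hh'
    -- a = 1 : split the interval
    · have hsplit : Set.Ioo (0:ℝ) 1 = Set.Ioo 0 2⁻¹ ∪ Set.Ico 2⁻¹ 1 :=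
        (Set.Ioo_union_Ico_eq_Ioo (by norm_num) (by norm_num)).symm
      have hdisj : Disjoint (Set.Ioo (0:ℝ) 2⁻¹) (Set.Ico 2⁻¹ 1) := by
        rw [Set.disjoint_left]
        rintro t ⟨_, h1⟩ ⟨h2, _⟩
        exact absurd h2 (not_le.mpr h1)
      rw [hsplit, lintegral_union measurableSet_Ico hdisj]
      have part1 : ∫⁻ t in Set.Ioo (0:ℝ) 2⁻¹, psi 1 t * Jf r t < ⊤ := by
        have hb : ∀ t ∈ Set.Ioo (0:ℝ) 2⁻¹, psi 1 t * Jf r t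
            ≤ ENNReal.ofReal 2 * ENNReal.ofReal ((1 + Lg t)^k) := by
          intro t ht
          have ht1 : t < 1 := ht.2.trans (by norm_num)
          have h2b : (1-t)⁻¹ ≤ 2 := by
            rw [inv_le_comm₀ (by linarith [ht.2]) (by norm_num)]
            linarith [ht.2]
          rw [psi_one]
          exact mul_le_mul' (ENNReal.ofReal_le_ofReal h2b) (ihD t ⟨ht.1, ht1⟩)
        calc ∫⁻ t in Set.Ioo (0:ℝ) 2⁻¹, psi 1 t * Jf r t
            ≤ ∫⁻ t in Set.Ioo (0:ℝ) 2⁻¹, ENNReal.ofReal 2 * ENNReal.ofReal ((1 + Lg t)^k) :=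
              setLIntegral_mono' measurableSet_Ioo hb
          _ ≤ ∫⁻ t in Set.Ioo (0:ℝ) 1, ENNReal.ofReal 2 * ENNReal.ofReal ((1 + Lg t)^k) :=
              lintegral_mono_set (Set.Ioo_subset_Ioo le_rfl (by norm_num))
          _ = ENNReal.ofReal 2 * ∫⁻ t in Set.Ioo (0:ℝ) 1, ENNReal.ofReal ((1 + Lg t)^k) :=
              lintegral_const_mul' _ _ ENNReal.ofReal_ne_top
          _ < ⊤ := ENNReal.mul_lt_top ENNReal.ofReal_lt_top (keyInt k)
      have part2 : ∫⁻ t in Set.Ico (2⁻¹:ℝ) 1, psi 1 t * Jf r t < ⊤ := by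
        have hb : ∀ t ∈ Set.Ico (2⁻¹:ℝ) 1, psi 1 t * Jf r t
            ≤ ENNReal.ofReal (2 * (1 + Real.log 2)^(k-1)) := by
          intro t ht
          have ht0 : (0:ℝ) < t := lt_of_lt_of_le (by norm_num) ht.1
          have ht1 : t < 1 := ht.2
          have h1t : (0:ℝ) < 1 - t := by linarith
          have hLt : Lg t ≤ Real.log 2 := by
            rw [Lg]
            apply Real.log_le_log (by positivity)
            rw [inv_le_comm₀ ht0 (by norm_num)]
            exact ht.1
          have hLt0 : 0 ≤ Lg t := Lg_nonneg ht0 ht1.le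
          calc psi 1 t * Jf r t
              ≤ ENNReal.ofReal (1-t)⁻¹ * ENNReal.ofReal ((1-t)/t * (1 + Lg t)^(k-1)) := by
                rw [psi_one]; exact mul_le_mul_right (ihC t ⟨ht0, ht1⟩) _
            _ = ENNReal.ofReal (t⁻¹ * (1 + Lg t)^(k-1)) := by
                rw [← ENNReal.ofReal_mul (by positivity)]
                congr 1
                field_simp
            _ ≤ ENNReal.ofReal (2 * (1 + Real.log 2)^(k-1)) := by
                apply ENNReal.ofReal_le_ofReal
                apply mul_le_mul
                · rw [inv_le_comm₀ ht0 (by norm_num)]; exact ht.1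
                · exact pow_le_pow_left₀ (by linarith) (by linarith) _
                · positivity
                · norm_num
        calc ∫⁻ t in Set.Ico (2⁻¹:ℝ) 1, psi 1 t * Jf r t
            ≤ ∫⁻ _ in Set.Ico (2⁻¹:ℝ) 1, ENNReal.ofReal (2 * (1 + Real.log 2)^(k-1)) :=
              setLIntegral_mono' measurableSet_Ico hb
          _ = ENNReal.ofReal (2 * (1 + Real.log 2)^(k-1)) * volume (Set.Ico (2⁻¹:ℝ) 1) :=
              setLIntegral_const _ _
          _ < ⊤ := ENNReal.mul_lt_top ENNReal.ofReal_lt_top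
              (by rw [Real.volume_Ico]; exact ENNReal.ofReal_lt_top)
      exact ENNReal.add_lt_top.mpr ⟨part1, part2⟩
    -- a = 2
    · have hb : ∀ t ∈ Set.Ioo (0:ℝ) 1, psi 2 t * Jf r t ≤ ENNReal.ofReal ((1 + Lg t)^k) := by
        intro t ht
        rw [psi_two, one_mul]
        exact ihD t ht
      calc ∫⁻ t in Set.Ioo (0:ℝ) 1, psi 2 t * Jf r t
          ≤ ∫⁻ t in Set.Ioo (0:ℝ) 1, ENNReal.ofReal ((1 + Lg t)^k) :=
            setLIntegral_mono' measurableSet_Ioo hb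
        _ < ⊤ := keyInt k

-- bridge lemmas
lemma LL_wd (z : ℂ) (l : List Ltr) : LL z (wd l) = itInt (l.map (ev z)) := by
  rw [LL, wd, MonoidAlgebra.of_apply]
  erw [Finsupp.lift_apply]
  rw [LinearEquiv.coe_coe, MonoidAlgebra.coeffLinearEquiv_apply, MonoidAlgebra.coeff_single]
  rw [Finsupp.sum_single_index (by simp)]
  simp

lemma itInt_eq (z : ℂ) (l : List Ltr) :
    itInt (l.map (ev z)) = ∫ t in simS l.length 0,
      ∏ i : Fin l.length, ((t i : ℂ) - ev z (l.get i))⁻¹ := by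
  suffices h : ∀ (n : ℕ) (c : Fin n → ℂ) (a : List ℂ) (h : a.length = n),
      (∀ i : Fin a.length, a.get i = c (Fin.cast h i)) →
      itInt a = ∫ t in simS n 0, ∏ i : Fin n, ((t i : ℂ) - c i)⁻¹ by
    refine h l.length (fun i => ev z (l.get i)) (l.map (ev z)) (l.length_map _) fun i => ?_
    simp
  intro n c a h hget
  subst h
  have hget' : ∀ i : Fin a.length, a.get i = c i := by
    intro i
    rw [hget i]
    congr 1
  have hfun : (fun t : Fin a.length → ℝ => ∏ i, ((t i : ℂ) - a.get i)⁻¹)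
      = fun t => ∏ i, ((t i : ℂ) - c i)⁻¹ := by
    funext t
    exact Finset.prod_congr rfl fun i _ => by rw [hget' i]
  rw [itInt, hfun]
  rfl

lemma letter_bound {b : Ltr} {z : ℂ} (hz : 2 ≤ ‖z‖) {t : ℝ}
    (ht : t ∈ Set.Ioo (0:ℝ) 1) :
    ENNReal.ofReal ‖((t:ℂ) - ev z b)⁻¹‖ ≤ psi b t := by
  rcases ltr_cases b with rfl | rfl | rfl
  · rw [psi_zero]
    apply le_of_eq
    rw [show ev z 0 = 0 from rfl, sub_zero]
    simp [norm_inv, Complex.norm_real, Real.norm_eq_abs, abs_of_pos ht.1]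
  · rw [psi_one]
    apply le_of_eq
    rw [show ev z 1 = 1 from rfl, show (t:ℂ) - 1 = ((t - 1 : ℝ) : ℂ) by push_cast; ring]
    rw [norm_inv, Complex.norm_real, Real.norm_eq_abs,
      abs_of_neg (by linarith [ht.2] : t - 1 < 0)]
    congr 1
    ring
  · rw [psi_two]
    have habs : ‖(t:ℂ)‖ ≤ 1 := by
      rw [Complex.norm_real, Real.norm_eq_abs, abs_of_pos ht.1]; exact ht.2.le
    have h1 : (1:ℝ) ≤ ‖(t:ℂ) - z‖ := by
      have h2 := norm_sub_norm_le z ((t:ℂ))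
      rw [← norm_sub_rev]
      linarith
    rw [show ev z 2 = z from rfl]
    refine ENNReal.ofReal_le_one.mpr ?_
    rw [norm_inv]
    exact inv_le_one_of_one_le₀ h1

lemma letter_bound_z {z : ℂ} (hz : 2 ≤ ‖z‖) {t : ℝ} (ht : t ∈ Set.Ioo (0:ℝ) 1) :
    ENNReal.ofReal ‖((t:ℂ) - ev z 2)⁻¹‖ ≤ ENNReal.ofReal (2 / ‖z‖) := by
  have habs : ‖(t:ℂ)‖ ≤ 1 := by
    rw [Complex.norm_real, Real.norm_eq_abs, abs_of_pos ht.1]; exact ht.2.le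
  have h1 : ‖z‖ / 2 ≤ ‖(t:ℂ) - z‖ := by
    have h2 := norm_sub_norm_le z ((t:ℂ))
    rw [norm_sub_rev] at h2
    linarith
  rw [show ev z 2 = z from rfl]
  apply ENNReal.ofReal_le_ofReal
  rw [norm_inv]
  rw [show (2:ℝ) / ‖z‖ = (‖z‖ / 2)⁻¹ by
    rw [div_eq_mul_inv, div_eq_mul_inv]; field_simp]
  exact inv_anti₀ (by linarith) h1


open Filter in
/-- For an admissible word containing the letter `e_z`, `L(w)(z) → 0` as `|z| → ∞`. -/
theorem tendsto_zero_at_infty (l : List Ltr) (hez : (2 : Ltr) ∈ l) (ha : adm l) :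
    Tendsto (fun z : ℂ => LL z (wd l))
      (comap (fun z : ℂ => ‖z‖) atTop ⊓ Filter.principal segᶜ) (nhds 0) := by
  have hne : l ≠ [] := List.ne_nil_of_mem hez
  obtain ⟨hhead, hlast⟩ := ha hne
  have hh : l.head hne ≠ 0 := by rcases hhead with h | h <;> rw [h] <;> decide
  have hl1 : l.getLast hne ≠ 1 := by rcases hlast with h | h <;> rw [h] <;> decide
  have hfin := J_fin l hne hh hl1
  obtain ⟨j, hj⟩ := List.mem_iff_get.mp hez
  set C := (Jf l 0).toReal with hC
  have key : ∀ z : ℂ, 2 ≤ ‖z‖ → ‖LL z (wd l)‖ ≤ 2 / ‖z‖ * C := by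
    intro z hz
    rw [LL_wd, itInt_eq]
    refine le_trans (norm_integral_le_lintegral_norm _) ?_
    have hpt : ∀ t ∈ simS l.length 0,
        ENNReal.ofReal ‖∏ i : Fin l.length, ((t i : ℂ) - ev z (l.get i))⁻¹‖
          ≤ ENNReal.ofReal (2 / ‖z‖) * ∏ i, psi (l.get i) (t i) := by
      intro t ht
      rw [norm_prod, ENNReal.ofReal_prod_of_nonneg (fun i _ => norm_nonneg _)]
      have hprod_eq : (∏ i, psi (l.get i) (t i))
          = ∏ i ∈ Finset.univ.erase j, psi (l.get i) (t i) := by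
        rw [← Finset.mul_prod_erase Finset.univ _ (Finset.mem_univ j), hj, psi_two, one_mul]
      calc (∏ i, ENNReal.ofReal ‖((t i : ℂ) - ev z (l.get i))⁻¹‖)
          = ENNReal.ofReal ‖((t j : ℂ) - ev z (l.get j))⁻¹‖
              * ∏ i ∈ Finset.univ.erase j, ENNReal.ofReal ‖((t i : ℂ) - ev z (l.get i))⁻¹‖ :=
            (Finset.mul_prod_erase Finset.univ _ (Finset.mem_univ j)).symm
        _ ≤ ENNReal.ofReal (2 / ‖z‖)
              * ∏ i ∈ Finset.univ.erase j, psi (l.get i) (t i) := by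
            refine mul_le_mul' ?_ (Finset.prod_le_prod' fun i _ => letter_bound hz (ht.2 i))
            rw [hj]
            exact letter_bound_z hz (ht.2 j)
        _ = ENNReal.ofReal (2 / ‖z‖) * ∏ i, psi (l.get i) (t i) := by
            rw [hprod_eq]
    have hle : (∫⁻ t in simS l.length 0,
        ENNReal.ofReal ‖∏ i : Fin l.length, ((t i : ℂ) - ev z (l.get i))⁻¹‖)
          ≤ ENNReal.ofReal (2 / ‖z‖) * Jf l 0 := by
      calc _ ≤ ∫⁻ t in simS l.length 0,
            ENNReal.ofReal (2 / ‖z‖) * ∏ i, psi (l.get i) (t i) :=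
          setLIntegral_mono' (measurableSet_simS _ _) hpt
        _ = ENNReal.ofReal (2 / ‖z‖) * Jf l 0 :=
          lintegral_const_mul' _ _ ENNReal.ofReal_ne_top
    refine le_trans (ENNReal.toReal_mono ?_ hle) ?_
    · exact ENNReal.mul_ne_top ENNReal.ofReal_ne_top hfin.ne
    · rw [ENNReal.toReal_mul, ENNReal.toReal_ofReal (by positivity)]
  set F := comap (fun z : ℂ => ‖z‖) atTop ⊓ Filter.principal segᶜ with hF
  have habs : Tendsto (fun z : ℂ => ‖z‖) F atTop := tendsto_comap.mono_left inf_le_left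
  refine squeeze_zero_norm' (a := fun z : ℂ => 2 / ‖z‖ * C) ?_ ?_
  · filter_upwards [habs.eventually_ge_atTop 2] with z hz using key z hz
  · have h1 : Tendsto (fun z : ℂ => ‖z‖⁻¹) F (nhds 0) := habs.inv_tendsto_atTop
    have h2 := (h1.const_mul (2:ℝ)).mul_const C
    simpa [div_eq_mul_inv, mul_zero, zero_mul] using h2


end
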